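/- Let a and b be coprime nonzero integers and let d > 1 be an odd integer with gcd(d, ab) = 1. Then d ∈ G_{(a,b)} if and only if there exists an integer s ≥ 1 such that 2^s || ord_p(a/b) for every prime p dividing d. -/

import Mathlib

lemma aux_isUnit_intCast {n : ℕ} {a : ℤ} (h : IsCoprime a (n : ℤ)) : IsUnit (a : ZMod n) := by
  obtain ⟨u, v, huv⟩ := h
  have h2 : (u : ZMod n) * (a : ZMod n) = 1 := by
    have := congrArg (Int.cast : ℤ → ZMod n) huv
    push_cast at this
    simpa [ZMod.natCast_self] using this
  exact IsUnit.of_mul_eq_one _ ((mul_comm _ _).trans h2)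

lemma aux_v2 {r s : ℕ} (hr : r ≠ 0) :
    (2 ^ s ∣ r ∧ ¬ 2 ^ (s + 1) ∣ r) ↔ r.factorization 2 = s := by
  rw [Nat.Prime.pow_dvd_iff_le_factorization Nat.prime_two hr,
      Nat.Prime.pow_dvd_iff_le_factorization Nat.prime_two hr]
  omega

lemma aux_dvd_two_mul {r k : ℕ} (hk : k ≠ 0) (h1 : r ∣ 2 * k) (h2 : ¬ r ∣ k) :
    r.factorization 2 = k.factorization 2 + 1 := by
  have hr : r ≠ 0 := by rintro rfl; rw [zero_dvd_iff] at h1; omega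
  have h2k : 2 * k ≠ 0 := by omega
  have hle : r.factorization ≤ (2 * k).factorization :=
    (Nat.factorization_le_iff_dvd hr h2k).mpr h1
  have hfmul : (2 * k).factorization = (2 : ℕ).factorization + k.factorization :=
    Nat.factorization_mul two_ne_zero hk
  have h2f : ∀ q : ℕ, (2 : ℕ).factorization q = if 2 = q then 1 else 0 := by
    intro q
    simp [Nat.Prime.factorization Nat.prime_two, Finsupp.single_apply]
  have hub : r.factorization 2 ≤ k.factorization 2 + 1 := by
    have := hle 2
    rw [hfmul] at this
    simp [h2f 2] at this
    omega
  have hlb : ¬ r.factorization 2 ≤ k.factorization 2 := by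
    intro hcon
    apply h2
    rw [← Nat.factorization_le_iff_dvd hr hk]
    intro q
    rcases eq_or_ne q 2 with rfl | hq
    · exact hcon
    · have := hle q
      rw [hfmul] at this
      simpa [h2f q, Ne.symm hq] using this
  omega

lemma aux_lift {p : ℕ} (hp : p.Prime) {c : ℤ} (h : (p : ℤ) ∣ c - 1) :
    ∀ m : ℕ, (p : ℤ) ^ (m + 1) ∣ c ^ (p ^ m) - 1 := by
  intro m
  induction m with
  | zero => simpa using h
  | succ m ih =>
    have key : c ^ p ^ (m + 1) - 1 =
        (∑ i ∈ Finset.range p, (c ^ p ^ m) ^ i) * (c ^ p ^ m - 1) := by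
      rw [geom_sum_mul, ← pow_mul, ← pow_succ]
    have hS : (p : ℤ) ∣ ∑ i ∈ Finset.range p, (c ^ p ^ m) ^ i := by
      rw [← ZMod.intCast_zmod_eq_zero_iff_dvd]
      push_cast
      have hc1 : (c : ZMod p) = 1 := by
        have : ((c - 1 : ℤ) : ZMod p) = 0 := (ZMod.intCast_zmod_eq_zero_iff_dvd _ p).mpr h
        push_cast at this
        linear_combination this
      simp [hc1, ZMod.natCast_self]
    rw [key, pow_succ, mul_comm ((p : ℤ) ^ (m + 1)) _]
    exact mul_dvd_mul hS ih

lemma aux_sq {p e : ℕ} (hp : p.Prime) (hodd : p ≠ 2) (he : 1 ≤ e) {x : ZMod (p ^ e)}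
    (hx2 : x ^ 2 = 1) (hx1 : x ≠ 1) : x = -1 := by
  haveI : NeZero (p ^ e) := ⟨pow_ne_zero e hp.ne_zero⟩
  set c : ℤ := (x.val : ℤ) with hc
  have hcz : ((c : ℤ) : ZMod (p ^ e)) = x := by
    rw [hc]
    push_cast
    rw [ZMod.natCast_val, ZMod.cast_id]
  have hdvd : (p : ℤ) ^ e ∣ (c - 1) * (c + 1) := by
    have h0 : (((c - 1) * (c + 1) : ℤ) : ZMod (p ^ e)) = 0 := by
      push_cast
      rw [hcz]
      linear_combination hx2
    have := (ZMod.intCast_zmod_eq_zero_iff_dvd _ (p ^ e)).mp h0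
    push_cast at this
    exact this
  have hp' : Prime (p : ℤ) := Nat.prime_iff_prime_int.mp hp
  have hp2 : ¬ (p : ℤ) ∣ 2 := by
    intro hd
    have := Int.le_of_dvd (by norm_num) hd
    have h3 : 3 ≤ p := (Nat.Prime.two_le hp).lt_of_ne (Ne.symm hodd)
    omega
  by_cases hd1 : (p : ℤ) ∣ c - 1
  · exfalso
    have hd2 : ¬ (p : ℤ) ∣ c + 1 := by
      intro hdd
      exact hp2 (by have := dvd_sub hdd hd1; simpa using this)
    have hfull : (p : ℤ) ^ e ∣ c - 1 := hp'.pow_dvd_of_dvd_mul_right e hd2 hdvd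
    apply hx1
    have : ((c - 1 : ℤ) : ZMod (p ^ e)) = 0 := by
      rw [ZMod.intCast_zmod_eq_zero_iff_dvd]
      push_cast
      exact hfull
    push_cast at this
    rw [hcz] at this
    linear_combination this
  · have hfull : (p : ℤ) ^ e ∣ c + 1 := hp'.pow_dvd_of_dvd_mul_left e hd1 hdvd
    have : ((c + 1 : ℤ) : ZMod (p ^ e)) = 0 := by
      rw [ZMod.intCast_zmod_eq_zero_iff_dvd]
      push_cast
      exact hfull
    push_cast at this
    rw [hcz] at this
    linear_combination this

lemma aux_lcm {s : ℕ} (t : Finset ℕ) (f : ℕ → ℕ)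
    (h : ∀ p ∈ t, f p ≠ 0 ∧ ¬ 2 ^ (s + 1) ∣ f p) :
    t.lcm f ≠ 0 ∧ ¬ 2 ^ (s + 1) ∣ t.lcm f := by
  classical
  induction t using Finset.induction_on with
  | empty =>
    refine ⟨by simp, ?_⟩
    simp only [Finset.lcm_empty]
    intro hdvd
    have h1 := Nat.le_of_dvd one_pos hdvd
    have h2 : 2 ≤ 2 ^ (s + 1) := Nat.le_self_pow (by omega) 2
    omega
  | @insert a t ha ih =>
    have hfa := h a (Finset.mem_insert_self a t)
    have ht := ih fun p hp => h p (Finset.mem_insert_of_mem hp)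
    rw [Finset.lcm_insert]
    have hne : Nat.lcm (f a) (t.lcm f) ≠ 0 := Nat.lcm_ne_zero hfa.1 ht.1
    rw [lcm_eq_nat_lcm]
    refine ⟨hne, ?_⟩
    intro hdvd
    rw [Nat.Prime.pow_dvd_iff_le_factorization Nat.prime_two hne,
      Nat.factorization_lcm hfa.1 ht.1, Finsupp.sup_apply] at hdvd
    rw [Nat.Prime.pow_dvd_iff_le_factorization Nat.prime_two hfa.1] at hfa
    rw [Nat.Prime.pow_dvd_iff_le_factorization Nat.prime_two ht.1] at ht
    rcases le_sup_iff.mp hdvd with h' | h' <;> omega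

/-- `d ∈ G_{(a,b)}`: the positive integer `d` divides `a^k + b^k` for some integer `k ≥ 1`. -/
def Good (a b : ℤ) (d : ℕ) : Prop := ∃ k : ℕ, 1 ≤ k ∧ (d : ℤ) ∣ a ^ k + b ^ k

/-- `ord_n(a/b)`: the multiplicative order of `a·b⁻¹` modulo `n`. -/
noncomputable def ordAB (a b : ℤ) (n : ℕ) : ℕ :=
  orderOf ((a : ZMod n) * (b : ZMod n)⁻¹)

theorem good_odd_iff (a b : ℤ) (ha : a ≠ 0) (hb : b ≠ 0) (hab : IsCoprime a b)
    (d : ℕ) (hd : 1 < d) (hdodd : Odd d) (hdab : IsCoprime (d : ℤ) (a * b)) :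
    Good a b d ↔ ∃ s : ℕ, 1 ≤ s ∧ ∀ p : ℕ, p.Prime → p ∣ d →
      2 ^ s ∣ ordAB a b p ∧ ¬ 2 ^ (s + 1) ∣ ordAB a b p := by
  constructor
  · rintro ⟨k, hk1, hk2⟩
    have hk0 : k ≠ 0 := by omega
    refine ⟨k.factorization 2 + 1, by omega, ?_⟩
    intro p pp hpd
    haveI : Fact p.Prime := ⟨pp⟩
    have hp2 : p ≠ 2 := by
      rintro rfl
      rw [Nat.odd_iff] at hdodd
      omega
    have hp3 : 2 < p := lt_of_le_of_ne pp.two_le (Ne.symm hp2)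
    haveI : Fact (2 < p) := ⟨hp3⟩
    have hcop : IsCoprime ((p : ℤ)) (a * b) :=
      hdab.of_isCoprime_of_dvd_left (Int.natCast_dvd_natCast.mpr hpd)
    have hub : IsUnit (b : ZMod p) := aux_isUnit_intCast hcop.of_mul_right_right.symm
    set x : ZMod p := (a : ZMod p) * (b : ZMod p)⁻¹ with hx
    have h0 : (a : ZMod p) ^ k = -(b : ZMod p) ^ k := by
      have h0' : ((a ^ k + b ^ k : ℤ) : ZMod p) = 0 :=
        (ZMod.intCast_zmod_eq_zero_iff_dvd _ p).mpr
          ((Int.natCast_dvd_natCast.mpr hpd).trans hk2)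
      push_cast at h0'
      linear_combination h0'
    have hxk : x ^ k = -1 := by
      rw [hx, mul_pow, h0, neg_mul, ← mul_pow, ZMod.mul_inv_of_unit _ hub, one_pow]
    have hdvd2k : orderOf x ∣ 2 * k := orderOf_dvd_of_pow_eq_one (by
      rw [mul_comm, pow_mul, hxk]; exact neg_one_sq)
    have hndvd : ¬ orderOf x ∣ k := by
      intro hcon
      have hcon2 := orderOf_dvd_iff_pow_eq_one.mp hcon
      rw [hxk] at hcon2
      exact ZMod.neg_one_ne_one hcon2
    have hr0 : orderOf x ≠ 0 := by
      rintro h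
      rw [h, zero_dvd_iff] at hdvd2k
      omega
    have hval := aux_dvd_two_mul hk0 hdvd2k hndvd
    have goal := (aux_v2 hr0).mpr hval
    simpa [ordAB, hx] using goal
  · rintro ⟨s, hs1, hs⟩
    have hd0 : d ≠ 0 := by omega
    classical
    set f : ℕ → ℕ := fun p =>
      orderOf ((a : ZMod (p ^ d.factorization p)) * (b : ZMod (p ^ d.factorization p))⁻¹) with hf
    have main : ∀ p ∈ d.primeFactors, f p ≠ 0 ∧ 2 ^ s ∣ f p ∧ ¬ 2 ^ (s + 1) ∣ f p ∧
        ∀ K : ℕ, f p ∣ 2 * K → ¬ 2 ^ s ∣ K →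
          (p : ℤ) ^ (d.factorization p) ∣ a ^ K + b ^ K := by
      intro p hp
      have pp : p.Prime := Nat.prime_of_mem_primeFactors hp
      have hpd : p ∣ d := Nat.dvd_of_mem_primeFactors hp
      haveI : Fact p.Prime := ⟨pp⟩
      have hp2 : p ≠ 2 := by
        rintro rfl
        rw [Nat.odd_iff] at hdodd
        omega
      set e := d.factorization p with he'
      have he : 1 ≤ e := Nat.Prime.factorization_pos_of_dvd pp hd0 hpd
      haveI : NeZero (p ^ e) := ⟨pow_ne_zero e pp.ne_zero⟩
      have hpe : (p : ℤ) ^ e ∣ (d : ℤ) := by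
        have h1 := Nat.ordProj_dvd d p
        have h2 : ((p ^ e : ℕ) : ℤ) ∣ (d : ℤ) := Int.natCast_dvd_natCast.mpr h1
        push_cast at h2
        exact h2
      have hcopm : IsCoprime ((p : ℤ) ^ e) (a * b) := hdab.of_isCoprime_of_dvd_left hpe
      have hcops : IsCoprime ((p : ℤ)) (a * b) :=
        hdab.of_isCoprime_of_dvd_left (Int.natCast_dvd_natCast.mpr hpd)
      have hua : IsUnit (a : ZMod (p ^ e)) := aux_isUnit_intCast (by
        have h3 := hcopm.of_mul_right_left.symm
        exact_mod_cast h3)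
      have hvb : IsUnit (b : ZMod (p ^ e)) := aux_isUnit_intCast (by
        have h3 := hcopm.of_mul_right_right.symm
        exact_mod_cast h3)
      set y : ZMod (p ^ e) := (a : ZMod (p ^ e)) * (b : ZMod (p ^ e))⁻¹ with hy
      have hfp : f p = orderOf y := rfl
      have huy : IsUnit y := hua.mul (IsUnit.of_mul_eq_one _ (ZMod.inv_mul_of_unit _ hvb))
      obtain ⟨U, hU⟩ := huy
      have hA : f p ≠ 0 := by
        rw [hfp, ← hU, orderOf_units]
        exact (orderOf_pos U).ne'
      have hdvdp : p ∣ p ^ e := dvd_pow_self p (by omega)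
      set φ := ZMod.castHom hdvdp (ZMod p) with hφ
      set xp : ZMod p := (a : ZMod p) * (b : ZMod p)⁻¹ with hxp
      have hvbp : IsUnit (b : ZMod p) := aux_isUnit_intCast hcops.of_mul_right_right.symm
      have hφb : φ ((b : ZMod (p ^ e))⁻¹) = (b : ZMod p)⁻¹ := by
        have h1 : (b : ZMod p) * φ ((b : ZMod (p ^ e))⁻¹) = 1 := by
          rw [← map_intCast φ b, ← map_mul, ZMod.mul_inv_of_unit _ hvb, map_one]
        exact eq_inv_of_mul_eq_one_right h1
      have hφy : φ y = xp := by
        rw [hy, map_mul, map_intCast, hφb, hxp]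
      obtain ⟨hsr, hsr2⟩ := hs p pp hpd
      have hi : ordAB a b p ∣ f p := by
        show orderOf xp ∣ f p
        apply orderOf_dvd_of_pow_eq_one
        rw [← hφy, ← map_pow, hfp, pow_orderOf_eq_one, map_one]
      have hii : f p ∣ ordAB a b p * p ^ (e - 1) := by
        rw [hfp]
        apply orderOf_dvd_of_pow_eq_one
        rw [pow_mul]
        set z : ZMod (p ^ e) := y ^ ordAB a b p with hz
        have hφz : φ z = 1 := by
          rw [hz, map_pow, hφy]
          exact pow_orderOf_eq_one xp
        set c : ℤ := (z.val : ℤ) with hcdef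
        have hcz : ((c : ℤ) : ZMod (p ^ e)) = z := by
          rw [hcdef]
          push_cast
          rw [ZMod.natCast_val, ZMod.cast_id]
        have h4 : ((z.val : ℕ) : ZMod p) = 1 := by
          rw [ZMod.natCast_val]
          rw [hφ, ZMod.castHom_apply] at hφz
          exact hφz
        have hc1 : (p : ℤ) ∣ c - 1 := by
          rw [hcdef, ← ZMod.intCast_zmod_eq_zero_iff_dvd]
          push_cast
          rw [h4]
          ring
        have h5 := aux_lift pp hc1 (e - 1)
        rw [Nat.sub_add_cancel he] at h5
        have h0 : ((c ^ p ^ (e - 1) - 1 : ℤ) : ZMod (p ^ e)) = 0 := by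
          rw [ZMod.intCast_zmod_eq_zero_iff_dvd]
          push_cast
          exact h5
        push_cast at h0
        rw [hcz] at h0
        exact sub_eq_zero.mp h0
      have hB : 2 ^ s ∣ f p := hsr.trans hi
      have hC : ¬ 2 ^ (s + 1) ∣ f p := by
        intro hcon
        have h1 : (2 ^ (s + 1)) ∣ ordAB a b p * p ^ (e - 1) := hcon.trans hii
        have hco : Nat.Coprime (2 ^ (s + 1)) (p ^ (e - 1)) :=
          Nat.Coprime.pow _ _ ((Nat.coprime_primes Nat.prime_two pp).mpr (Ne.symm hp2))
        exact hsr2 (hco.dvd_of_dvd_mul_right h1)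
      refine ⟨hA, hB, hC, ?_⟩
      intro K hdvd2K hnot
      have hy2K : y ^ (2 * K) = 1 := by
        have h6 : orderOf y ∣ 2 * K := by rw [← hfp]; exact hdvd2K
        exact orderOf_dvd_iff_pow_eq_one.mp h6
      have hysq : (y ^ K) ^ 2 = 1 := by
        rw [← pow_mul, mul_comm]
        exact hy2K
      have hyK1 : y ^ K ≠ 1 := by
        intro hcon
        have h7 : f p ∣ K := by
          rw [hfp]
          exact orderOf_dvd_iff_pow_eq_one.mpr hcon
        exact hnot (hB.trans h7)
      have hyK : y ^ K = -1 := aux_sq pp hp2 he hysq hyK1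
      have hzero : ((a ^ K + b ^ K : ℤ) : ZMod (p ^ e)) = 0 := by
        push_cast
        have h2 : ((b : ZMod (p ^ e))⁻¹ * (b : ZMod (p ^ e))) ^ K = 1 := by
          rw [ZMod.inv_mul_of_unit _ hvb, one_pow]
        have h3 : (a : ZMod (p ^ e)) ^ K = -(b : ZMod (p ^ e)) ^ K := by
          calc (a : ZMod (p ^ e)) ^ K
              = (a : ZMod (p ^ e)) ^ K * (((b : ZMod (p ^ e))⁻¹ * (b : ZMod (p ^ e))) ^ K) := by
                rw [h2, mul_one]
            _ = ((a : ZMod (p ^ e)) * (b : ZMod (p ^ e))⁻¹) ^ K * (b : ZMod (p ^ e)) ^ K := by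
                rw [mul_pow, mul_pow]
                ring
            _ = -(b : ZMod (p ^ e)) ^ K := by rw [← hy, hyK]; ring
        rw [h3]
        ring
      have h8 := (ZMod.intCast_zmod_eq_zero_iff_dvd _ (p ^ e)).mp hzero
      push_cast at h8
      exact h8
    -- assemble
    set L := d.primeFactors.lcm f with hL'
    have hL := aux_lcm d.primeFactors f (fun p hp => ⟨(main p hp).1, (main p hp).2.2.1⟩)
    rw [← hL'] at hL
    obtain ⟨p0, hp0⟩ := Nat.nonempty_primeFactors.mpr hd
    have h2L : 2 ∣ L :=
      (dvd_pow_self 2 (by omega : s ≠ 0)).trans ((main p0 hp0).2.1.trans (Finset.dvd_lcm hp0))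
    set K := L / 2 with hK'
    have hLK : 2 * K = L := Nat.mul_div_cancel' h2L
    have hK1 : 1 ≤ K := by
      rcases Nat.eq_zero_or_pos K with h | h
      · exfalso; apply hL.1; omega
      · exact h
    have hnotK : ¬ 2 ^ s ∣ K := by
      intro hcon
      apply hL.2
      rw [← hLK, pow_succ']
      exact mul_dvd_mul_left 2 hcon
    refine ⟨K, hK1, ?_⟩
    rcases eq_or_ne (a ^ K + b ^ K) 0 with hzero | hzero
    · simp [hzero]
    rw [Int.natCast_dvd]
    have hN : (a ^ K + b ^ K).natAbs ≠ 0 := fun h => hzero (Int.natAbs_eq_zero.mp h)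
    rw [← Nat.factorization_le_iff_dvd hd0 hN, Finsupp.le_def]
    intro q
    rcases eq_or_ne (d.factorization q) 0 with h0 | h0
    · simp [h0]
    have hq : q ∈ d.primeFactors := by
      rw [← Nat.support_factorization]
      exact Finsupp.mem_support_iff.mpr h0
    have hfq : f q ∣ 2 * K := by rw [hLK]; exact Finset.dvd_lcm hq
    have hdiv := (main q hq).2.2.2 K hfq hnotK
    have h9 : q ^ d.factorization q ∣ (a ^ K + b ^ K).natAbs := by
      rw [← Int.natCast_dvd]
      push_cast
      exact hdiv
    exact (Nat.Prime.pow_dvd_iff_le_factorization (Nat.prime_of_mem_primeFactors hq) hN).mp h9
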